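/- Set ρ_j = rank(P_j) for 1 ≤ j ≤ k+1. Then there exist matrices L_{ij} ∈ ℝ^{p_i×ρ_j} for 1 ≤ i ≤ k and 1 ≤ j ≤ k+1, and matrices Q_j ∈ ℝ^{ρ_j×m} for 1 ≤ j ≤ k+1, such that: (i) Q_j Q_jᵀ = I_{ρ_j} for each j and Q_j Q_lᵀ = 0 for j ≠ l; (ii) Σ_{j=1}^{k+1} Q_jᵀ Q_j = I_m (so in particular ρ_1 + ⋯ + ρ_{k+1} = m); (iii) P_j = Q_jᵀ Q_j for every 1 ≤ j ≤ k+1; (iv) J_i P_j = L_{ij} Q_j for all 1 ≤ i ≤ k and 1 ≤ j ≤ k+1; (v) L_{ij} = 0 whenever j > i (in particular L_{i,k+1} = 0), so that J_i = Σ_{j=1}^{i} L_{ij} Q_j; and (vi) rank(L_{ii}) = ρ_i for every 1 ≤ i ≤ k. -/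

import Mathlib

open Matrix

theorem proj_decomp {n : ℕ} (P : Matrix (Fin n) (Fin n) ℝ)
    (hsym : Pᵀ = P) (hidem : P * P = P) :
    ∃ Q : Matrix (Fin P.rank) (Fin n) ℝ, Q * Qᵀ = 1 ∧ Qᵀ * Q = P := by
  have hherm : P.IsHermitian := by
    rw [Matrix.IsHermitian, conjTranspose_eq_transpose_of_trivial, hsym]
  set U : Matrix (Fin n) (Fin n) ℝ := (hherm.eigenvectorUnitary : Matrix (Fin n) (Fin n) ℝ) with hU
  set ev : Fin n → ℝ := hherm.eigenvalues with hev
  have hUU : star U * U = 1 := Unitary.coe_star_mul_self hherm.eigenvectorUnitary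
  have hUU' : U * star U = 1 := Unitary.coe_mul_star_self hherm.eigenvectorUnitary
  have hdiag : star U * P * U = diagonal (RCLike.ofReal ∘ ev) :=
    by have h := hherm.conjStarAlgAut_star_eigenvectorUnitary; rw [Unitary.conjStarAlgAut_apply] at h; simpa using h
  have hofReal : (RCLike.ofReal ∘ ev : Fin n → ℝ) = ev := by ext i; simp
  rw [hofReal] at hdiag
  -- eigenvalues are 0 or 1
  have hD2 : diagonal ev * diagonal ev = diagonal ev := by
    rw [← hdiag]
    calc (star U * P * U) * (star U * P * U)
        = star U * (P * (U * star U) * P) * U := by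
          simp only [mul_assoc]
      _ = star U * P * U := by rw [hUU', mul_one, hidem]
  have hev01 : ∀ i, ev i = 0 ∨ ev i = 1 := by
    intro i
    have h2 := congrFun (congrFun hD2 i) i
    rw [diagonal_mul_diagonal] at h2
    simp only [diagonal_apply_eq] at h2
    have : ev i * (ev i - 1) = 0 := by ring_nf; linarith [h2]
    rcases mul_eq_zero.mp this with h | h
    · exact Or.inl h
    · exact Or.inr (by linarith)
  -- rank
  have hrank : P.rank = Fintype.card {i // ev i ≠ 0} := hherm.rank_eq_card_non_zero_eigs
  have e : Fin P.rank ≃ {i // ev i ≠ 0} :=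
    Fintype.equivOfCardEq (by rw [Fintype.card_fin, hrank])
  set Q : Matrix (Fin P.rank) (Fin n) ℝ := Matrix.of (fun r c => (star U) ((e r) : Fin n) c)
    with hQdef
  have hQ1 : Q * Qᵀ = 1 := by
    ext r s
    have : (Q * Qᵀ) r s = (star U * U) ((e r) : Fin n) ((e s) : Fin n) := by
      simp [mul_apply, hQdef, star_apply, conjTranspose_apply]
    rw [this, hUU]
    by_cases h : r = s
    · subst h; simp [Matrix.one_apply]
    · have : ((e r) : Fin n) ≠ ((e s) : Fin n) := by
        intro hc
        exact h (e.injective (Subtype.ext hc))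
      simp [Matrix.one_apply, this, h]
  have hQ2 : Qᵀ * Q = P := by
    have hP' : P = U * diagonal ev * star U := by
      rw [← hdiag]
      calc P = (U * star U) * P * (U * star U) := by rw [hUU']; simp
        _ = U * (star U * P * U) * star U := by simp only [mul_assoc]
    ext a b
    have lhs : (Qᵀ * Q) a b = ∑ r : Fin P.rank, U a ((e r) : Fin n) * U b ((e r) : Fin n) := by
      simp only [mul_apply, transpose_apply, hQdef, of_apply]
      apply Finset.sum_congr rfl
      intro r _
      simp [star_apply, conjTranspose_apply]
    have rhs : P a b = ∑ i : Fin n, ev i * (U a i * U b i) := by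
      rw [hP']
      simp only [mul_apply, diagonal_apply, star_apply, conjTranspose_apply, star_trivial,
        mul_ite, mul_zero, ite_mul, zero_mul, Finset.sum_ite_eq', Finset.mem_univ, if_true]
      apply Finset.sum_congr rfl
      intro i _
      ring
    rw [lhs, rhs]
    have step1 : ∑ r : Fin P.rank, U a ((e r) : Fin n) * U b ((e r) : Fin n)
        = ∑ i : {i // ev i ≠ 0}, U a (i : Fin n) * U b (i : Fin n) :=
      Fintype.sum_equiv e _ _ (fun r => rfl)
    have step2 : ∑ i : {i // ev i ≠ 0}, U a (i : Fin n) * U b (i : Fin n)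
        = ∑ i ∈ Finset.univ.filter (fun i => ev i ≠ 0), U a i * U b i :=
      (Finset.sum_subtype (s := Finset.univ.filter fun i => ev i ≠ 0)
        (p := fun i => ev i ≠ 0) (fun x => by simp) (fun i => U a i * U b i)).symm
    rw [step1, step2, Finset.sum_filter]
    apply Finset.sum_congr rfl
    intro i _
    rcases hev01 i with h | h
    · rw [h]; norm_num
    · rw [h]; norm_num
  exact ⟨Q, hQ1, hQ2⟩


theorem stmt5 (k m : ℕ) (hk : 1 ≤ k) (p : Fin k → ℕ)
    (J : (i : Fin k) → Matrix (Fin (p i)) (Fin m) ℝ)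
    (Jst : (i : Fin (k + 1)) →
      Matrix {x : (j : Fin k) × Fin (p j) // (x.1 : ℕ) < (i : ℕ)} (Fin m) ℝ)
    (hJst : ∀ (i : Fin (k + 1)) (x) (c), Jst i x c = J x.1.1 x.1.2 c)
    (Jstp : (i : Fin (k + 1)) →
      Matrix (Fin m) {x : (j : Fin k) × Fin (p j) // (x.1 : ℕ) < (i : ℕ)} ℝ)
    (hJstp1 : ∀ i, Jst i * Jstp i * Jst i = Jst i)
    (hJstp2 : ∀ i, Jstp i * Jst i * Jstp i = Jstp i)
    (hJstp3 : ∀ i, (Jst i * Jstp i)ᵀ = Jst i * Jstp i)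
    (hJstp4 : ∀ i, (Jstp i * Jst i)ᵀ = Jstp i * Jst i)
    (N : Fin (k + 1) → Matrix (Fin m) (Fin m) ℝ)
    (hN0 : N 0 = 1)
    (hN : ∀ i : Fin (k + 1), N i = 1 - Jstp i * Jst i)
    (M : (i : Fin k) → Matrix (Fin (p i)) (Fin m) ℝ)
    (hM : ∀ i, M i = J i * N i.castSucc)
    (Mp : (i : Fin k) → Matrix (Fin m) (Fin (p i)) ℝ)
    (hMp1 : ∀ i, M i * Mp i * M i = M i)
    (hMp2 : ∀ i, Mp i * M i * Mp i = Mp i)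
    (hMp3 : ∀ i, (M i * Mp i)ᵀ = M i * Mp i)
    (hMp4 : ∀ i, (Mp i * M i)ᵀ = Mp i * M i)
    (P : Fin (k + 1) → Matrix (Fin m) (Fin m) ℝ)
    (hP : ∀ i : Fin k, P i.castSucc = Mp i * M i)
    (hPlast : P (Fin.last k) = 1 - ∑ i : Fin k, P i.castSucc) :
    ∃ (L : (i : Fin k) → (j : Fin (k + 1)) → Matrix (Fin (p i)) (Fin ((P j).rank)) ℝ)
      (Q : (j : Fin (k + 1)) → Matrix (Fin ((P j).rank)) (Fin m) ℝ),
      (∀ j, Q j * (Q j)ᵀ = 1) ∧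
      (∀ j l, j ≠ l → Q j * (Q l)ᵀ = 0) ∧
      (∑ j : Fin (k + 1), (Q j)ᵀ * Q j = 1) ∧
      (∑ j : Fin (k + 1), (P j).rank = m) ∧
      (∀ j, P j = (Q j)ᵀ * Q j) ∧
      (∀ (i : Fin k) (j : Fin (k + 1)), J i * P j = L i j * Q j) ∧
      (∀ (i : Fin k) (j : Fin (k + 1)), (i : ℕ) < (j : ℕ) → L i j = 0) ∧
      (∀ i : Fin k, J i = ∑ j ∈ Finset.Iic (i.castSucc : Fin (k + 1)), L i j * Q j) ∧
      (∀ i : Fin k, (L i i.castSucc).rank = (P i.castSucc).rank) := by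
  -- basic facts about N
  have hNsym : ∀ j, (N j)ᵀ = N j := by
    intro j; rw [hN j, transpose_sub, transpose_one, hJstp4]
  have hJstNj : ∀ j, Jst j * N j = 0 := by
    intro j
    rw [hN j, Matrix.mul_sub, Matrix.mul_one, sub_eq_zero, ← Matrix.mul_assoc]
    exact (hJstp1 j).symm
  have hrow : ∀ (j : Fin (k+1)) (i : Fin k) (r : Fin (p i)), (i : ℕ) < (j : ℕ) →
      ∀ c : Fin m, (∑ y, J i r y * N j y c) = 0 := by
    intro j i r hij c
    have h := congrFun (congrFun (hJstNj j) ⟨⟨i, r⟩, hij⟩) c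
    simpa [Matrix.mul_apply, hJst] using h
  have hJN : ∀ (i : Fin k) (j : Fin (k+1)), (i : ℕ) < (j : ℕ) → J i * N j = 0 := by
    intro i j hij
    ext r c
    simpa [Matrix.mul_apply] using hrow j i r hij c
  have hJstN' : ∀ (i j : Fin (k+1)), (i : ℕ) ≤ (j : ℕ) → Jst i * N j = 0 := by
    intro i j hij
    ext x c
    obtain ⟨⟨a, r⟩, hx⟩ := x
    simp only [Matrix.mul_apply, hJst, Matrix.zero_apply]
    exact hrow j a r (lt_of_lt_of_le hx hij) c
  have hNN : ∀ (i j : Fin (k+1)), (i : ℕ) ≤ (j : ℕ) → N i * N j = N j := by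
    intro i j hij
    rw [hN i, Matrix.sub_mul, Matrix.one_mul, Matrix.mul_assoc, hJstN' i j hij, Matrix.mul_zero, sub_zero]
  have hNN' : ∀ (i j : Fin (k+1)), (i : ℕ) ≤ (j : ℕ) → N j * N i = N j := by
    intro i j hij
    have h := congrArg Matrix.transpose (hNN i j hij)
    rwa [transpose_mul, hNsym, hNsym] at h
  -- coercion facts
  have hcs : ∀ i : Fin k, ((i.castSucc : Fin (k+1)) : ℕ) = (i : ℕ) := fun i => rfl
  have hss : ∀ i : Fin k, ((i.succ : Fin (k+1)) : ℕ) = (i : ℕ) + 1 := fun i => rfl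
  -- M and P basic facts
  have hMN : ∀ i : Fin k, M i * N i.castSucc = M i := by
    intro i
    rw [hM i, Matrix.mul_assoc, hNN _ _ le_rfl]
  have hMNs : ∀ i : Fin k, M i * N i.succ = 0 := by
    intro i
    rw [hM i, Matrix.mul_assoc, hNN i.castSucc i.succ (by rw [hcs, hss]; omega),
      hJN i i.succ (by rw [hss]; omega)]
  have hMP : ∀ i : Fin k, M i * P i.castSucc = M i := by
    intro i
    rw [hP i, ← Matrix.mul_assoc, hMp1]
  have hPsymC : ∀ i : Fin k, (P i.castSucc)ᵀ = P i.castSucc := by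
    intro i; rw [hP i]; exact hMp4 i
  have hPidemC : ∀ i : Fin k, P i.castSucc * P i.castSucc = P i.castSucc := by
    intro i
    rw [hP i]
    calc Mp i * M i * (Mp i * M i) = Mp i * M i * Mp i * M i := by simp only [Matrix.mul_assoc]
      _ = Mp i * M i := by rw [hMp2]
  have hPNc : ∀ i : Fin k, P i.castSucc * N i.castSucc = P i.castSucc := by
    intro i; rw [hP i, Matrix.mul_assoc, hMN i]
  have hPNs : ∀ i : Fin k, P i.castSucc * N i.succ = 0 := by
    intro i; rw [hP i, Matrix.mul_assoc, hMNs i, Matrix.mul_zero]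
  have hNcP : ∀ i : Fin k, N i.castSucc * P i.castSucc = P i.castSucc := by
    intro i
    have h := congrArg Matrix.transpose (hPNc i)
    rwa [transpose_mul, hNsym, hPsymC] at h
  have hNsP : ∀ i : Fin k, N i.succ * P i.castSucc = 0 := by
    intro i
    have h := congrArg Matrix.transpose (hPNs i)
    rwa [transpose_mul, hNsym, hPsymC, transpose_zero] at h
  -- the key identity : P (castSucc i) = N (castSucc i) - N (succ i)
  have hPD : ∀ i : Fin k, P i.castSucc = N i.castSucc - N i.succ := by
    intro i
    have hcss : ((i.castSucc : Fin (k+1)) : ℕ) ≤ ((i.succ : Fin (k+1)) : ℕ) := by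
      rw [hcs, hss]; omega
    set X : Matrix (Fin m) (Fin m) ℝ :=
      (N i.castSucc - N i.succ) * (1 - P i.castSucc) with hX
    have hPX : P i.castSucc * X = 0 := by
      calc P i.castSucc * X
          = (P i.castSucc * N i.castSucc - P i.castSucc * N i.succ) * (1 - P i.castSucc) := by
            rw [hX]; noncomm_ring
        _ = P i.castSucc * (1 - P i.castSucc) := by rw [hPNc, hPNs, sub_zero]
        _ = P i.castSucc - P i.castSucc * P i.castSucc := by noncomm_ring
        _ = 0 := by rw [hPidemC, sub_self]
    have hNcX : N i.castSucc * X = X := by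
      calc N i.castSucc * X
          = (N i.castSucc * N i.castSucc - N i.castSucc * N i.succ) * (1 - P i.castSucc) := by
            rw [hX]; noncomm_ring
        _ = X := by rw [hNN _ _ le_rfl, hNN i.castSucc i.succ hcss, hX]
    have hNsX : N i.succ * X = 0 := by
      calc N i.succ * X
          = (N i.succ * N i.castSucc - N i.succ * N i.succ) * (1 - P i.castSucc) := by
            rw [hX]; noncomm_ring
        _ = 0 := by rw [hNN' i.castSucc i.succ hcss, hNN _ _ le_rfl, sub_self, Matrix.zero_mul]
    have hMX : M i * X = 0 := by
      have h2 : Mp i * M i * X = 0 := by rw [← hP i]; exact hPX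
      calc M i * X = M i * Mp i * M i * X := by rw [hMp1]
        _ = M i * (Mp i * M i * X) := by simp only [Matrix.mul_assoc]
        _ = 0 := by rw [h2, Matrix.mul_zero]
    have hJX : J i * X = 0 := by
      calc J i * X = J i * (N i.castSucc * X) := by rw [hNcX]
        _ = J i * N i.castSucc * X := by rw [Matrix.mul_assoc]
        _ = M i * X := by rw [← hM i]
        _ = 0 := hMX
    have hJstCX : Jst i.castSucc * X = 0 := by
      calc Jst i.castSucc * X = Jst i.castSucc * (N i.castSucc * X) := by rw [hNcX]
        _ = Jst i.castSucc * N i.castSucc * X := by rw [Matrix.mul_assoc]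
        _ = 0 := by rw [hJstN' _ _ le_rfl, Matrix.zero_mul]
    have hJstSX : Jst i.succ * X = 0 := by
      ext x c
      obtain ⟨⟨a, r⟩, hx⟩ := x
      simp only [Matrix.mul_apply, hJst, Matrix.zero_apply]
      have hx' : (a : ℕ) < (i : ℕ) + 1 := by rwa [hss] at hx
      rcases Nat.lt_succ_iff_lt_or_eq.mp hx' with h | h
      · have h2 := congrFun (congrFun hJstCX ⟨⟨a, r⟩, by rwa [hcs]⟩) c
        simpa [Matrix.mul_apply, hJst] using h2
      · have ha : a = i := Fin.ext h
        subst ha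
        have h2 := congrFun (congrFun hJX r) c
        simpa [Matrix.mul_apply] using h2
    have hNsiX : N i.succ * X = X := by
      rw [hN i.succ, Matrix.sub_mul, Matrix.one_mul, Matrix.mul_assoc, hJstSX, Matrix.mul_zero,
        sub_zero]
    have hXzero : X = 0 := hNsiX.symm.trans hNsX
    have h3 : (N i.castSucc - N i.succ) - (N i.castSucc - N i.succ) * P i.castSucc = 0 := by
      calc (N i.castSucc - N i.succ) - (N i.castSucc - N i.succ) * P i.castSucc
          = (N i.castSucc - N i.succ) * (1 - P i.castSucc) := by noncomm_ring
        _ = 0 := by rw [← hX]; exact hXzero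
    rw [sub_eq_zero] at h3
    have h6 : (N i.castSucc - N i.succ) * P i.castSucc
        = N i.castSucc * P i.castSucc - N i.succ * P i.castSucc := by noncomm_ring
    rw [h6, hNcP, hNsP, sub_zero] at h3
    exact h3.symm
  -- telescoping sum
  have hsumC : ∑ i : Fin k, P i.castSucc = 1 - N (Fin.last k) := by
    set f : ℕ → Matrix (Fin m) (Fin m) ℝ :=
      fun n => N ⟨min n k, by omega⟩ with hf
    have step1 : ∑ i : Fin k, P i.castSucc = ∑ i : Fin k, (f i - f ((i : ℕ) + 1)) := by
      apply Finset.sum_congr rfl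
      intro i _
      have h1 : f (i : ℕ) = N i.castSucc := by
        apply congrArg N
        apply Fin.ext
        have := i.isLt
        simp only [hf, Fin.coe_castSucc]
        omega
      have h2 : f ((i : ℕ) + 1) = N i.succ := by
        apply congrArg N
        apply Fin.ext
        have := i.isLt
        simp only [hf, Fin.val_succ]
        omega
      rw [h1, h2, hPD i]
    rw [step1, Fin.sum_univ_eq_sum_range (fun n => f n - f (n + 1)) k,
      Finset.sum_range_sub' f k]
    have h0 : f 0 = N 0 := by
      apply congrArg N
      apply Fin.ext
      simp only [hf, Fin.val_zero]
      omega
    have hlast : f k = N (Fin.last k) := by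
      apply congrArg N
      apply Fin.ext
      simp only [hf, Fin.val_last]
      omega
    rw [h0, hlast, hN0]
  have hPlastN : P (Fin.last k) = N (Fin.last k) := by
    rw [hPlast, hsumC]; abel
  -- properties for all j
  have hPsym : ∀ j, (P j)ᵀ = P j := by
    intro j
    induction j using Fin.lastCases with
    | last => rw [hPlastN]; exact hNsym _
    | cast i => exact hPsymC i
  have hPidem : ∀ j, P j * P j = P j := by
    intro j
    induction j using Fin.lastCases with
    | last => rw [hPlastN]; exact hNN _ _ le_rfl
    | cast i => exact hPidemC i
  have hPNl : ∀ (i : Fin k) (l : Fin (k+1)), (i : ℕ) < (l : ℕ) → P i.castSucc * N l = 0 := by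
    intro i l hil
    have h1 : N i.succ * N l = N l := hNN i.succ l (by rw [hss]; omega)
    rw [← h1, ← Matrix.mul_assoc, hPNs, Matrix.zero_mul]
  have hJP0 : ∀ (i : Fin k) (j : Fin (k+1)), (i : ℕ) < (j : ℕ) → J i * P j = 0 := by
    intro i j hij
    induction j using Fin.lastCases with
    | last => rw [hPlastN]; exact hJN i (Fin.last k) hij
    | cast l =>
      rw [← hNcP l, ← Matrix.mul_assoc, hJN i l.castSucc hij, Matrix.zero_mul]
  have hPP0 : ∀ j l : Fin (k+1), j ≠ l → P j * P l = 0 := by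
    have key : ∀ j l : Fin (k+1), (j : ℕ) < (l : ℕ) → P j * P l = 0 := by
      intro j l hjl
      have hjk : (j : ℕ) < k := by
        have := l.isLt; omega
      have hj : j = (⟨(j : ℕ), hjk⟩ : Fin k).castSucc := by
        apply Fin.ext; rw [hcs]
      rw [hj]
      induction l using Fin.lastCases with
      | last =>
        rw [hPlastN]
        exact hPNl _ _ (by simpa using hjl)
      | cast l' =>
        rw [← hNcP l', ← Matrix.mul_assoc, hPNl _ _ (by simpa using hjl), Matrix.zero_mul]
    intro j l hjl
    rcases lt_trichotomy (j : ℕ) (l : ℕ) with h | h | h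
    · exact key j l h
    · exact absurd (Fin.ext h) hjl
    · have h2 := congrArg Matrix.transpose (key l j h)
      rwa [transpose_mul, hPsym, hPsym, transpose_zero] at h2
  have hsumP : ∑ j : Fin (k+1), P j = 1 := by
    rw [Fin.sum_univ_castSucc, hsumC, hPlastN]
    abel
  -- construct Q
  have hdec := fun j => proj_decomp (P j) (hPsym j) (hPidem j)
  choose Q hQ1 hQ2 using hdec
  have hQP : ∀ j, Q j * P j = Q j := by
    intro j
    calc Q j * P j = Q j * ((Q j)ᵀ * Q j) := by rw [hQ2 j]
      _ = (Q j * (Q j)ᵀ) * Q j := (Matrix.mul_assoc _ _ _).symm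
      _ = Q j := by rw [hQ1 j, Matrix.one_mul]
  have hPQt : ∀ j, P j * (Q j)ᵀ = (Q j)ᵀ := by
    intro j
    have h := congrArg Matrix.transpose (hQP j)
    rwa [transpose_mul, hPsym] at h
  refine ⟨fun i j => J i * (Q j)ᵀ, Q, hQ1, ?_, ?_, ?_, fun j => (hQ2 j).symm, ?_, ?_, ?_, ?_⟩
  · -- orthogonality of Q
    intro j l hjl
    calc Q j * (Q l)ᵀ = (Q j * P j) * (P l * (Q l)ᵀ) := by rw [hQP, hPQt]
      _ = Q j * (P j * P l) * (Q l)ᵀ := by simp only [Matrix.mul_assoc]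
      _ = 0 := by rw [hPP0 j l hjl, Matrix.mul_zero, Matrix.zero_mul]
  · -- sum of Qᵀ Q
    calc ∑ j : Fin (k+1), (Q j)ᵀ * Q j = ∑ j : Fin (k+1), P j :=
        Finset.sum_congr rfl (fun j _ => hQ2 j)
      _ = 1 := hsumP
  · -- sum of ranks
    have htr : ∀ j, Matrix.trace (P j) = ((P j).rank : ℝ) := by
      intro j
      calc Matrix.trace (P j) = Matrix.trace ((Q j)ᵀ * Q j) := by rw [hQ2 j]
        _ = Matrix.trace (Q j * (Q j)ᵀ) := Matrix.trace_mul_comm _ _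
        _ = Matrix.trace (1 : Matrix (Fin ((P j).rank)) (Fin ((P j).rank)) ℝ) := by rw [hQ1 j]
        _ = ((P j).rank : ℝ) := by rw [Matrix.trace_one]; simp
    have hs : ∑ j : Fin (k+1), ((P j).rank : ℝ) = (m : ℝ) := by
      calc ∑ j : Fin (k+1), ((P j).rank : ℝ) = ∑ j : Fin (k+1), Matrix.trace (P j) :=
          Finset.sum_congr rfl (fun j _ => (htr j).symm)
        _ = Matrix.trace (∑ j : Fin (k+1), P j) := (Matrix.trace_sum _ _).symm
        _ = Matrix.trace (1 : Matrix (Fin m) (Fin m) ℝ) := by rw [hsumP]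
        _ = (m : ℝ) := by rw [Matrix.trace_one]; simp
    exact_mod_cast hs
  · -- J i * P j = L i j * Q j
    intro i j
    show J i * P j = (J i * (Q j)ᵀ) * Q j
    rw [Matrix.mul_assoc, hQ2 j]
  · -- L i j = 0 for i < j
    intro i j hij
    show J i * (Q j)ᵀ = 0
    rw [← hPQt j, ← Matrix.mul_assoc, hJP0 i j hij, Matrix.zero_mul]
  · -- decomposition of J i
    intro i
    show J i = ∑ j ∈ Finset.Iic (i.castSucc : Fin (k + 1)), (J i * (Q j)ᵀ) * Q j
    have hfull : J i = ∑ j : Fin (k+1), (J i * (Q j)ᵀ) * Q j := by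
      calc J i = J i * 1 := (Matrix.mul_one _).symm
        _ = J i * ∑ j : Fin (k+1), P j := by rw [hsumP]
        _ = ∑ j : Fin (k+1), J i * P j := by rw [Matrix.mul_sum]
        _ = ∑ j : Fin (k+1), (J i * (Q j)ᵀ) * Q j := by
            apply Finset.sum_congr rfl
            intro j _
            rw [Matrix.mul_assoc, hQ2 j]
    conv_lhs => rw [hfull]
    refine (Finset.sum_subset (Finset.subset_univ _) ?_).symm
    intro j _ hj
    have hij : (i : ℕ) < (j : ℕ) := by
      rw [Finset.mem_Iic] at hj
      have := Fin.lt_iff_val_lt_val.mp (lt_of_not_ge hj)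
      rwa [hcs] at this
    rw [← hPQt j, ← Matrix.mul_assoc, hJP0 i j hij, Matrix.zero_mul, Matrix.zero_mul]
  · -- rank of L i i
    intro i
    show (J i * (Q i.castSucc)ᵀ).rank = (P i.castSucc).rank
    have hJPM : J i * P i.castSucc = M i := by
      calc J i * P i.castSucc = J i * (N i.castSucc * P i.castSucc) := by rw [hNcP]
        _ = J i * N i.castSucc * P i.castSucc := by rw [Matrix.mul_assoc]
        _ = M i := by rw [← hM i, hMP i]
    have hrankM : (M i).rank = (P i.castSucc).rank := by
      apply le_antisymm
      · conv_lhs => rw [← hMP i]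
        exact Matrix.rank_mul_le_right _ _
      · rw [hP i]
        exact Matrix.rank_mul_le_right _ _
    have hLQ : (J i * (Q i.castSucc)ᵀ) * Q i.castSucc = M i := by
      rw [Matrix.mul_assoc, hQ2, hJPM]
    apply le_antisymm
    · calc (J i * (Q i.castSucc)ᵀ).rank ≤ Fintype.card (Fin ((P i.castSucc).rank)) :=
          Matrix.rank_le_card_width _
        _ = (P i.castSucc).rank := Fintype.card_fin _
    · calc (P i.castSucc).rank = (M i).rank := hrankM.symm
        _ = ((J i * (Q i.castSucc)ᵀ) * Q i.castSucc).rank := by rw [hLQ]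
        _ ≤ (J i * (Q i.castSucc)ᵀ).rank := Matrix.rank_mul_le_left _ _
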